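/- arXiv:1603.04451 — 2 statements merged into one kernel-verified Lean document; each statement's English description precedes it below -/
import Mathlib

section
/- If a boolean formula in 3-CNF with n clauses is satisfiable, then the associated fan-star graph FS (with hub u, spoke edges e_{ij} = (u, v_{ij}) for i = 1..n, j = 1..3, and path edges (v_{i1},v_{i2}), (v_{i2},v_{i3})) admits a spanning tree T such that for every pair of spoke edges e_{ij}, e_{kl} whose literals are negations of each other, at most one of e_{ij}, e_{kl} lies in T; conversely, the existence of such a spanning tree implies satisfiability. -/
/-- A spanning tree of the multigraph given by `ends : E → Sym2 V`. -/
def IsSpanningTree {V E : Type*} [Fintype V] (ends : E → Sym2 V) (T : Finset E) : Prop :=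
  T.card + 1 = Fintype.card V ∧
    ∀ u v : V, Relation.ReflTransGen (fun a b => ∃ e ∈ T, ends e = s(a, b)) u v

/-- The fan-star graph built from a 3-CNF formula with `n` clauses: hub `none`,
nodes `some (i,j)` for clause `i` and literal position `j`, spoke edges
`Sum.inl (i,j) = (u, v_{ij})` and path edges `Sum.inr (i,k) = (v_{i,k}, v_{i,k+1})`. -/
def fanStarEnds (n : ℕ) : (Fin n × Fin 3) ⊕ (Fin n × Fin 2) → Sym2 (Option (Fin n × Fin 3))
  | Sum.inl p => s(none, some p)
  | Sum.inr (i, k) => s(some (i, k.castSucc), some (i, k.succ))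

/-- A 3-CNF formula with clauses `(x_{i1} ∨ x_{i2} ∨ x_{i3})`, where the literal `x_{ij}` is
the variable `(lit i j).1` with sign `(lit i j).2`, is satisfiable if and only if the
associated fan-star graph has a spanning tree containing at most one spoke edge from every
pair of spokes whose literals are negations of each other. -/
theorem threeSat_iff_fanStar_conflict_free_spanning_tree {α : Type*} (n : ℕ)
    (lit : Fin n → Fin 3 → α × Bool) :
    (∃ f : α → Bool, ∀ i : Fin n, ∃ j : Fin 3, f (lit i j).1 = (lit i j).2) ↔
    (∃ T : Finset ((Fin n × Fin 3) ⊕ (Fin n × Fin 2)),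
      IsSpanningTree (fanStarEnds n) T ∧
      ∀ i j k l, (lit i j).1 = (lit k l).1 → (lit i j).2 = !(lit k l).2 →
        ¬(Sum.inl (i, j) ∈ T ∧ Sum.inl (k, l) ∈ T)) := by
  classical
  constructor
  · rintro ⟨f, hf⟩
    choose j hj using hf
    refine ⟨(Finset.univ.image fun i => (Sum.inl (i, j i) : (Fin n × Fin 3) ⊕ (Fin n × Fin 2)))
        ∪ Finset.univ.image Sum.inr, ⟨?_, ?_⟩, ?_⟩
    · rw [Finset.card_union_of_disjoint (by simp [Finset.disjoint_left])]
      rw [Finset.card_image_of_injective _ (fun a b h => by simpa using (by simpa using h : a = b ∧ j a = j b).1),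
        Finset.card_image_of_injective _ Sum.inr_injective]
      simp [Fintype.card_option]
      ring
    · set T := (Finset.univ.image fun i => (Sum.inl (i, j i) : (Fin n × Fin 3) ⊕ (Fin n × Fin 2)))
        ∪ Finset.univ.image Sum.inr with hT
      set r := fun a b : Option (Fin n × Fin 3) => ∃ e ∈ T, fanStarEnds n e = s(a, b) with hr
      have hsymm : Symmetric r := by
        rintro a b ⟨e, he, h⟩; exact ⟨e, he, by rw [h, Sym2.eq_swap]⟩
      have rsymm : ∀ {a b}, Relation.ReflTransGen r a b → Relation.ReflTransGen r b a :=
        fun h => (haveI : Std.Symm r := ⟨fun _ _ h' => hsymm h'⟩; Relation.ReflTransGen.symmetric (r := r)).symm _ _ h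
      have hmemInr : ∀ p : Fin n × Fin 2, Sum.inr p ∈ T := by
        intro p; simp [hT]
      have step : ∀ i : Fin n, ∀ a b : Fin 3, Relation.ReflTransGen r (some (i, a)) (some (i, b)) := by
        intro i a b
        have e01 : Relation.ReflTransGen r (some (i, 0)) (some (i, 1)) :=
          Relation.ReflTransGen.single ⟨Sum.inr (i, 0), hmemInr _, rfl⟩
        have e12 : Relation.ReflTransGen r (some (i, 1)) (some (i, 2)) :=
          Relation.ReflTransGen.single ⟨Sum.inr (i, 1), hmemInr _, rfl⟩
        fin_cases a <;> fin_cases b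
        · rfl
        · exact e01
        · exact e01.trans e12
        · exact rsymm e01
        · rfl
        · exact e12
        · exact rsymm (e01.trans e12)
        · exact rsymm e12
        · rfl
      have reach : ∀ v, Relation.ReflTransGen r none v := by
        rintro (_ | ⟨i, k⟩)
        · rfl
        · have h1 : Relation.ReflTransGen r none (some (i, j i)) :=
            Relation.ReflTransGen.single ⟨Sum.inl (i, j i), by simp [hT], rfl⟩
          exact h1.trans (step i (j i) k)
      intro u v
      exact (rsymm (reach u)).trans (reach v)
    · intro i j' k l h1 h2 ⟨hm1, hm2⟩
      have hj' : j' = j i := by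
        rcases Finset.mem_union.1 hm1 with h | h <;> simp at h
        exact h.symm
      have hl : l = j k := by
        rcases Finset.mem_union.1 hm2 with h | h <;> simp at h
        exact h.symm
      subst hj' hl
      have h3 := hj i
      rw [h1, hj k] at h3
      rw [h2] at h3
      simp at h3
  · rintro ⟨T, ⟨_, hconn⟩, hfree⟩
    set r := fun a b : Option (Fin n × Fin 3) => ∃ e ∈ T, fanStarEnds n e = s(a, b) with hr
    have key : ∀ v, Relation.ReflTransGen r none v →
        ∀ i k, v = some (i, k) → ∃ j, Sum.inl (i, j) ∈ T := by
      intro v hv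
      induction hv with
      | refl => intro i k h; exact absurd h (by simp)
      | tail hb hrstep ih =>
        intro i k hc
        obtain ⟨e, heT, he⟩ := hrstep
        subst hc
        cases e with
        | inl p =>
          simp only [fanStarEnds, Sym2.eq_iff] at he
          rcases he with ⟨hb', hp⟩ | ⟨h, _⟩
          · obtain rfl : p = (i, k) := by simpa using hp
            exact ⟨k, heT⟩
          · simp at h
        | inr q =>
          obtain ⟨i', k'⟩ := q
          simp only [fanStarEnds, Sym2.eq_iff] at he
          rcases he with ⟨hb', hc'⟩ | ⟨hc', hb'⟩
          · obtain ⟨rfl, _⟩ : i' = i ∧ k'.succ = k := by simpa using hc'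
            exact ih _ _ hb'.symm
          · obtain ⟨rfl, _⟩ : i' = i ∧ k'.castSucc = k := by simpa using hc'
            exact ih _ _ hb'.symm
    have spoke : ∀ i : Fin n, ∃ j, Sum.inl (i, j) ∈ T := fun i =>
      key _ (hconn none (some (i, 0))) i 0 rfl
    refine ⟨fun x => if ∃ p : Fin n × Fin 3, Sum.inl p ∈ T ∧ (lit p.1 p.2).1 = x ∧
        (lit p.1 p.2).2 = true then true else false, ?_⟩
    intro i
    obtain ⟨j, hjT⟩ := spoke i
    refine ⟨j, ?_⟩
    show (if ∃ p : Fin n × Fin 3, Sum.inl p ∈ T ∧ (lit p.1 p.2).1 = (lit i j).1 ∧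
        (lit p.1 p.2).2 = true then true else false) = (lit i j).2
    by_cases hb : (lit i j).2 = true
    · rw [hb, if_pos ⟨(i, j), hjT, rfl, hb⟩]
    · rw [Bool.not_eq_true] at hb
      rw [hb, if_neg]
      rintro ⟨⟨k, l⟩, hkT, hx, hbt⟩
      exact hfree i j k l hx.symm (by simp [hb, hbt]) ⟨hjT, hkT⟩
end

section
/- In a fan graph F_n (path v_1−...−v_n plus a hub u adjacent to every v_i), the number of spanning trees satisfies τ(F_n) = 3·τ(F_{n-1}) − τ(F_{n-2}) for n ≥ 3, with τ(F_1) = 1 and τ(F_2) = 3. -/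
/-- The fan `F_n`: hub `none`, path vertices `some i`; spoke edges `Sum.inl i = (u, v_i)` and
path edges `Sum.inr ⟨i, _⟩ = (v_i, v_{i+1})`. -/
def fanEnds (n : ℕ) :
    (Fin n ⊕ {i : Fin n // (i : ℕ) + 1 < n}) → Sym2 (Option (Fin n))
  | Sum.inl i => s(none, some i)
  | Sum.inr ⟨i, h⟩ => s(some i, some ⟨(i : ℕ) + 1, h⟩)

/-- The number of spanning trees of the fan `F_n`. -/
noncomputable def tauFan (n : ℕ) : ℕ :=
  Set.ncard {T : Finset (Fin n ⊕ {i : Fin n // (i : ℕ) + 1 < n}) |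
    IsSpanningTree (fanEnds n) T}

namespace FanAux

/-- Automaton state: `none` is dead, `some false` = current block has no spoke yet,
`some true` = current block has exactly one spoke (and all completed blocks are fine). -/
abbrev St := Option Bool

/-- Letter `(b, s)`: `b` = the path edge into this vertex is present, `s` = spoke present. -/
def step : St → Bool × Bool → St
  | none, _ => none
  | some false, (b, s) => if b then (if s then some true else some false) else none
  | some true, (b, s) => if b then (if s then none else some true)
      else (if s then some true else some false)

/-- Run the automaton on letters `L 0, L 1, …` for `m` steps starting at `s`. -/
def run (s : St) (L : ℕ → Bool × Bool) : ℕ → St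
  | 0 => s
  | (m+1) => run (step s (L 0)) (fun k => L (k+1)) m

lemma run_succ_back (s : St) (L : ℕ → Bool × Bool) (m : ℕ) :
    run s L (m+1) = step (run s L m) (L m) := by
  induction m generalizing s L with
  | zero => rfl
  | succ m ih => rw [run, ih]; rfl

lemma run_none (L : ℕ → Bool × Bool) (m : ℕ) : run none L m = none := by
  induction m generalizing L with
  | zero => rfl
  | succ m ih => rw [run, step]; exact ih _

/-- Acceptance on a word of length `m`. -/
def acc (s : St) : (m : ℕ) → (Fin m → Bool × Bool) → Bool
  | 0, _ => decide (s = some true)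
  | (m+1), w => acc (step s (w 0)) m (fun i => w i.succ)

lemma acc_eq (m : ℕ) (L : ℕ → Bool × Bool) (s : St) :
    acc s m (fun i => L i.val) = decide (run s L m = some true) := by
  induction m generalizing L s with
  | zero => rfl
  | succ m ih =>
      exact ih (fun k => L (k+1)) (step s (L 0))

/-- Number of accepted words of length `m` from state `s`. -/
def cnt : ℕ → St → ℕ
  | 0, s => if s = some true then 1 else 0
  | (_+1), none => 0
  | (m+1), some false => cnt m (some false) + cnt m (some true)
  | (m+1), some true => cnt m (some false) + 2 * cnt m (some true)

lemma cnt_none (m : ℕ) : cnt m none = 0 := by cases m <;> rfl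

lemma cnt_succ (m : ℕ) (s : St) :
    cnt (m+1) s = ∑ x : Bool × Bool, cnt m (step s x) := by
  rw [Fintype.sum_prod_type, Fintype.sum_bool, Fintype.sum_bool, Fintype.sum_bool]
  match s with
  | none => simp [cnt_none, step]
  | some false =>
      have h1 : step (some false) (true, true) = some true := rfl
      have h2 : step (some false) (true, false) = some false := rfl
      have h3 : step (some false) (false, true) = none := rfl
      have h4 : step (some false) (false, false) = none := rfl
      rw [h1, h2, h3, h4]; simp [cnt, cnt_none]; ring
  | some true =>
      have h1 : step (some true) (true, true) = none := rfl
      have h2 : step (some true) (true, false) = some true := rfl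
      have h3 : step (some true) (false, true) = some true := rfl
      have h4 : step (some true) (false, false) = some false := rfl
      rw [h1, h2, h3, h4]; simp [cnt, cnt_none]; ring

lemma card_acc (m : ℕ) (s : St) :
    Fintype.card {w : Fin m → Bool × Bool // acc s m w = true} = cnt m s := by
  induction m generalizing s with
  | zero =>
      rcases eq_or_ne s (some true) with h | h
      · subst h
        rw [show cnt 0 (some true) = 1 from rfl]
        rw [Fintype.card_eq_one_iff]
        exact ⟨⟨finZeroElim, rfl⟩, fun w => Subtype.ext (funext fun i => i.elim0)⟩
      · rw [show acc s 0 = fun _ => decide (s = some true) from rfl]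
        simp only [cnt, if_neg h]
        rw [Fintype.card_eq_zero_iff]
        exact ⟨fun w => by have := w.2; simp [h] at this⟩
  | succ m ih =>
      rw [cnt_succ]
      classical
      let e0 : (Fin (m+1) → Bool × Bool) ≃ (Bool × Bool) × (Fin m → Bool × Bool) :=
        (Fin.consEquiv (fun _ => Bool × Bool)).symm
      have hacc : ∀ w : Fin (m+1) → Bool × Bool,
          acc s (m+1) w = acc (step s (w 0)) m (fun i => w i.succ) := fun w => rfl
      let e : {w : Fin (m+1) → Bool × Bool // acc s (m+1) w = true} ≃
          (Σ x : Bool × Bool, {t : Fin m → Bool × Bool // acc (step s x) m t = true}) :=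
        ((Equiv.subtypeEquiv e0 (fun w => by rw [hacc]; rfl)).trans
          (Equiv.subtypeProdEquivSigmaSubtype
            (fun (x : Bool × Bool) (t : Fin m → Bool × Bool) => acc (step s x) m t = true)))
      rw [Fintype.card_congr e, Fintype.card_sigma]
      exact Finset.sum_congr rfl fun x _ => ih _


/-- The leader (leftmost element) of the block of `k`, where blocks are the maximal
intervals connected by present path edges (`pe j` = edge between `j` and `j+1`). -/
def leader (pe : ℕ → Bool) : ℕ → ℕ
  | 0 => 0
  | (k+1) => if pe k then leader pe k else k + 1

lemma leader_succ_pos (pe : ℕ → Bool) {k : ℕ} (h : pe k = true) :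
    leader pe (k+1) = leader pe k := by simp [leader, h]

lemma leader_succ_neg (pe : ℕ → Bool) {k : ℕ} (h : pe k = false) :
    leader pe (k+1) = k + 1 := by simp [leader, h]

lemma leader_le (pe : ℕ → Bool) : ∀ k, leader pe k ≤ k
  | 0 => le_refl 0
  | (k+1) => by
      rw [leader]
      split
      · exact (leader_le pe k).trans (Nat.le_succ k)
      · exact le_refl _

lemma leader_eq_of_le (pe : ℕ → Bool) : ∀ {k j : ℕ}, j ≤ k → leader pe k ≤ j →
    leader pe j = leader pe k
  | 0, j, hj, _ => by
      have : j = 0 := by omega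
      rw [this]
  | (k+1), j, hj, hl => by
      cases hpe : pe k with
      | true =>
          rw [leader_succ_pos pe hpe] at hl ⊢
          rcases Nat.eq_or_lt_of_le hj with h | h
          · rw [h, leader_succ_pos pe hpe]
          · exact leader_eq_of_le pe (by omega) hl
      | false =>
          rw [leader_succ_neg pe hpe] at hl
          have : j = k + 1 := by omega
          rw [this]

lemma leader_eq_iff (pe : ℕ → Bool) {k j : ℕ} (h : j ≤ k) :
    leader pe j = leader pe k ↔ leader pe k ≤ j :=
  ⟨fun e => e ▸ leader_le pe j, leader_eq_of_le pe h⟩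

lemma leader_idem (pe : ℕ → Bool) (k : ℕ) : leader pe (leader pe k) = leader pe k :=
  leader_eq_of_le pe (leader_le pe k) (le_refl _)

section Chars
variable (pe sp : ℕ → Bool)

/-- No block contains two spokes (restricted to positions `< n`). -/
def I1 (n : ℕ) : Prop := ∀ i i', i < n → i' < n → leader pe i = leader pe i' →
  sp i = true → sp i' = true → i = i'

/-- Every block meets a spoke (restricted to positions `< n`). -/
def Cov (n : ℕ) : Prop := ∀ j, j < n → ∃ i, i < n ∧ leader pe i = leader pe j ∧ sp i = true

def Bchar (n : ℕ) : Prop := I1 pe sp n ∧ Cov pe sp n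

def Achar (n : ℕ) : Prop := I1 pe sp n ∧
  (∀ j, j < n → leader pe (n-1) ≤ j → sp j = false) ∧
  (∀ j, j < n → j < leader pe (n-1) → ∃ i, i < n ∧ leader pe i = leader pe j ∧ sp i = true)

variable {pe sp}

lemma I1_mono {m n : ℕ} (h : m ≤ n) (h1 : I1 pe sp n) : I1 pe sp m :=
  fun i i' hi hi' => h1 i i' (by omega) (by omega)

/-- Case (pe = t, sp = t): `B`-characterization steps back to the `A`-characterization. -/
lemma tt_B {k : ℕ} (hpe : pe k = true) (hsp : sp (k+1) = true) :
    Bchar pe sp (k+2) ↔ Achar pe sp (k+1) := by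
  have lsucc := leader_succ_pos pe hpe
  constructor
  · rintro ⟨h1, h2⟩
    refine ⟨I1_mono (by omega) h1, ?_, ?_⟩
    · intro j hj hlj
      simp only [Nat.add_sub_cancel] at hlj
      by_contra hsj
      rw [Bool.not_eq_false] at hsj
      have hlj2 : leader pe j = leader pe (k+1) := by
        rw [lsucc]
        exact leader_eq_of_le pe (by omega) hlj
      have := h1 j (k+1) (by omega) (by omega) hlj2 hsj hsp
      omega
    · intro j hj hjl
      simp only [Nat.add_sub_cancel] at hjl
      obtain ⟨i, hi, hli, hsi⟩ := h2 j (by omega)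
      refine ⟨i, ?_, hli, hsi⟩
      rcases Nat.lt_succ_iff_lt_or_eq.mp hi with h | h
      · exact h
      · exfalso
        subst h
        have := leader_le pe j
        rw [lsucc] at hli
        omega
  · rintro ⟨h1, h2, h3⟩
    constructor
    · intro i i' hi hi' hll hsi hsi'
      rcases Nat.lt_succ_iff_lt_or_eq.mp hi with h | h <;>
        rcases Nat.lt_succ_iff_lt_or_eq.mp hi' with h' | h'
      · exact h1 i i' h h' hll hsi hsi'
      · exfalso
        subst h'
        rw [lsucc] at hll
        have hle : leader pe k ≤ i := hll ▸ leader_le pe i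
        have := h2 i h hle
        rw [hsi] at this; exact absurd this (by simp)
      · exfalso
        subst h
        rw [lsucc] at hll
        have hle : leader pe k ≤ i' := hll.symm ▸ leader_le pe i'
        have := h2 i' h' hle
        rw [hsi'] at this; exact absurd this (by simp)
      · omega
    · intro j hj
      have hj' : j ≤ k + 1 := by omega
      by_cases hmem : leader pe (k+1) ≤ j
      · exact ⟨k+1, by omega, (leader_eq_of_le pe hj' hmem).symm, hsp⟩
      · push_neg at hmem
        rw [lsucc] at hmem
        have hlk := leader_le pe k
        obtain ⟨i, hi, hli, hsi⟩ := h3 j (by omega) hmem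
        exact ⟨i, by omega, hli, hsi⟩

/-- New spoke while block continues or starts: the `A`-characterization fails at `k+2`. -/
lemma spoke_not_A {k : ℕ} (hsp : sp (k+1) = true) : ¬ Achar pe sp (k+2) := by
  rintro ⟨-, h2, -⟩
  have e1 : k + 2 - 1 = k + 1 := by omega
  have := h2 (k+1) (by omega) (by rw [e1]; exact leader_le pe (k+1))
  rw [hsp] at this
  exact absurd this (by simp)

/-- Case (pe = t, sp = f). -/
lemma tf_B {k : ℕ} (hpe : pe k = true) (hsp : sp (k+1) = false) :
    Bchar pe sp (k+2) ↔ Bchar pe sp (k+1) := by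
  have lsucc := leader_succ_pos pe hpe
  constructor
  · rintro ⟨h1, h2⟩
    refine ⟨I1_mono (by omega) h1, fun j hj => ?_⟩
    obtain ⟨i, hi, hli, hsi⟩ := h2 j (by omega)
    have : i ≠ k + 1 := fun h => by rw [h, hsp] at hsi; exact absurd hsi (by simp)
    exact ⟨i, by omega, hli, hsi⟩
  · rintro ⟨h1, h2⟩
    constructor
    · intro i i' hi hi' hll hsi hsi'
      have hi2 : i ≠ k+1 := fun h => by rw [h, hsp] at hsi; exact absurd hsi (by simp)
      have hi2' : i' ≠ k+1 := fun h => by rw [h, hsp] at hsi'; exact absurd hsi' (by simp)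
      exact h1 i i' (by omega) (by omega) hll hsi hsi'
    · intro j hj
      rcases Nat.lt_succ_iff_lt_or_eq.mp hj with h | h
      · obtain ⟨i, hi, hli, hsi⟩ := h2 j h
        exact ⟨i, by omega, hli, hsi⟩
      · subst h
        obtain ⟨i, hi, hli, hsi⟩ := h2 k (by omega)
        exact ⟨i, by omega, by rw [hli, lsucc], hsi⟩

/-- Case (pe = t, sp = f) for `A`. -/
lemma tf_A {k : ℕ} (hpe : pe k = true) (hsp : sp (k+1) = false) :
    Achar pe sp (k+2) ↔ Achar pe sp (k+1) := by
  have lsucc := leader_succ_pos pe hpe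
  have e1 : k + 2 - 1 = k + 1 := by omega
  simp only [Achar, e1, Nat.add_sub_cancel, lsucc]
  constructor
  · rintro ⟨h1, h2, h3⟩
    refine ⟨I1_mono (by omega) h1, fun j hj hlj => h2 j (by omega) hlj, fun j hj hjl => ?_⟩
    obtain ⟨i, hi, hli, hsi⟩ := h3 j (by omega) hjl
    have : i ≠ k + 1 := fun h => by rw [h, hsp] at hsi; exact absurd hsi (by simp)
    exact ⟨i, by omega, hli, hsi⟩
  · rintro ⟨h1, h2, h3⟩
    refine ⟨?_, ?_, ?_⟩
    · intro i i' hi hi' hll hsi hsi'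
      have hi2 : i ≠ k+1 := fun h => by rw [h, hsp] at hsi; exact absurd hsi (by simp)
      have hi2' : i' ≠ k+1 := fun h => by rw [h, hsp] at hsi'; exact absurd hsi' (by simp)
      exact h1 i i' (by omega) (by omega) hll hsi hsi'
    · intro j hj hlj
      rcases Nat.lt_succ_iff_lt_or_eq.mp hj with h | h
      · exact h2 j h hlj
      · subst h; exact hsp
    · intro j hj hjl
      have hjk : j < k + 1 := by have := leader_le pe k; omega
      obtain ⟨i, hi, hli, hsi⟩ := h3 j hjk hjl
      exact ⟨i, by omega, hli, hsi⟩

/-- Case (pe = f, sp = t). -/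
lemma ft_B {k : ℕ} (hpe : pe k = false) (hsp : sp (k+1) = true) :
    Bchar pe sp (k+2) ↔ Bchar pe sp (k+1) := by
  have lsucc := leader_succ_neg pe hpe
  constructor
  · rintro ⟨h1, h2⟩
    refine ⟨I1_mono (by omega) h1, fun j hj => ?_⟩
    obtain ⟨i, hi, hli, hsi⟩ := h2 j (by omega)
    have : i ≠ k + 1 := by
      rintro rfl
      rw [lsucc] at hli
      have := leader_le pe j
      omega
    exact ⟨i, by omega, hli, hsi⟩
  · rintro ⟨h1, h2⟩
    constructor
    · intro i i' hi hi' hll hsi hsi'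
      rcases Nat.lt_succ_iff_lt_or_eq.mp hi with h | h <;>
        rcases Nat.lt_succ_iff_lt_or_eq.mp hi' with h' | h'
      · exact h1 i i' h h' hll hsi hsi'
      · subst h'; rw [lsucc] at hll; have := leader_le pe i; omega
      · subst h; rw [lsucc] at hll; have := leader_le pe i'; omega
      · omega
    · intro j hj
      rcases Nat.lt_succ_iff_lt_or_eq.mp hj with h | h
      · obtain ⟨i, hi, hli, hsi⟩ := h2 j h
        exact ⟨i, by omega, hli, hsi⟩
      · subst h; exact ⟨k+1, by omega, rfl, hsp⟩

/-- Case (pe = f, sp = f): `B` fails. -/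
lemma ff_not_B {k : ℕ} (hpe : pe k = false) (hsp : sp (k+1) = false) :
    ¬ Bchar pe sp (k+2) := by
  rintro ⟨-, h2⟩
  obtain ⟨i, hi, hli, hsi⟩ := h2 (k+1) (by omega)
  rw [leader_succ_neg pe hpe] at hli
  have := leader_le pe i
  have : i = k + 1 := by omega
  rw [this, hsp] at hsi
  exact absurd hsi (by simp)

/-- Case (pe = f, sp = f): `A` at `k+2` iff `B` at `k+1`. -/
lemma ff_A {k : ℕ} (hpe : pe k = false) (hsp : sp (k+1) = false) :
    Achar pe sp (k+2) ↔ Bchar pe sp (k+1) := by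
  have lsucc := leader_succ_neg pe hpe
  have e1 : k + 2 - 1 = k + 1 := by omega
  simp only [Achar, e1, Nat.add_sub_cancel, lsucc]
  constructor
  · rintro ⟨h1, h2, h3⟩
    refine ⟨I1_mono (by omega) h1, fun j hj => ?_⟩
    obtain ⟨i, hi, hli, hsi⟩ := h3 j (by omega) (by omega)
    have : i ≠ k + 1 := fun h => by rw [h, hsp] at hsi; exact absurd hsi (by simp)
    exact ⟨i, by omega, hli, hsi⟩
  · rintro ⟨h1, h2⟩
    refine ⟨?_, ?_, ?_⟩
    · intro i i' hi hi' hll hsi hsi'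
      have hi2 : i ≠ k+1 := fun h => by rw [h, hsp] at hsi; exact absurd hsi (by simp)
      have hi2' : i' ≠ k+1 := fun h => by rw [h, hsp] at hsi'; exact absurd hsi' (by simp)
      exact h1 i i' (by omega) (by omega) hll hsi hsi'
    · intro j hj hlj
      have : j = k + 1 := by omega
      subst this; exact hsp
    · intro j hj hjl
      obtain ⟨i, hi, hli, hsi⟩ := h2 j (by omega)
      exact ⟨i, by omega, hli, hsi⟩

end Chars

end FanAux

namespace FanAux

/-- Letters fed to the automaton: position `k` carries (edge into `k` present, spoke at `k`). -/
def letter (pe sp : ℕ → Bool) (k : ℕ) : Bool × Bool :=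
  (if k = 0 then false else pe (k-1), sp k)

theorem autoChar (pe sp : ℕ → Bool) : ∀ k : ℕ,
    (run (some true) (letter pe sp) (k+1) = some true ↔ Bchar pe sp (k+1)) ∧
    (run (some true) (letter pe sp) (k+1) = some false ↔ Achar pe sp (k+1)) := by
  intro k
  induction k with
  | zero =>
      have h0 : run (some true) (letter pe sp) 1 = step (some true) (false, sp 0) := by
        rw [run_succ_back]
        rfl
      rw [h0]
      cases hs : sp 0 with
      | true =>
          constructor
          · refine iff_of_true (by simp [step]) ⟨?_, ?_⟩
            · intro i i' hi hi' _ _ _; omega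
            · intro j hj
              have hj0 : j = 0 := by omega
              subst hj0
              exact ⟨0, by omega, rfl, hs⟩
          · refine iff_of_false (by simp [step]) ?_
            rintro ⟨-, h2, -⟩
            have := h2 0 (by omega) (by simp [leader])
            rw [hs] at this; exact absurd this (by simp)
      | false =>
          constructor
          · refine iff_of_false (by simp [step]) ?_
            rintro ⟨-, h2⟩
            obtain ⟨i, hi, -, hsi⟩ := h2 0 (by omega)
            have : i = 0 := by omega
            rw [this, hs] at hsi; exact absurd hsi (by simp)
          · refine iff_of_true (by simp [step]) ⟨?_, ?_, ?_⟩
            · intro i i' hi hi' _ _ _; omega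
            · intro j hj _
              have hj0 : j = 0 := by omega
              subst hj0; exact hs
            · intro j hj hjl
              simp [leader] at hjl
  | succ k ih =>
      obtain ⟨ihB, ihA⟩ := ih
      have hrun : run (some true) (letter pe sp) (k+2) =
          step (run (some true) (letter pe sp) (k+1)) (pe k, sp (k+1)) := by
        rw [run_succ_back]
        rfl
      rw [hrun]
      cases hpe : pe k with
      | true =>
          cases hsp : sp (k+1) with
          | true =>
              constructor
              · rw [tt_B hpe hsp, ← ihA]
                rcases run (some true) (letter pe sp) (k+1) with _ | (_|_) <;> simp [step]
              · refine iff_of_false ?_ (spoke_not_A hsp)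
                rcases run (some true) (letter pe sp) (k+1) with _ | (_|_) <;> simp [step]
          | false =>
              constructor
              · rw [tf_B hpe hsp, ← ihB]
                rcases run (some true) (letter pe sp) (k+1) with _ | (_|_) <;> simp [step]
              · rw [tf_A hpe hsp, ← ihA]
                rcases run (some true) (letter pe sp) (k+1) with _ | (_|_) <;> simp [step]
      | false =>
          cases hsp : sp (k+1) with
          | true =>
              constructor
              · rw [ft_B hpe hsp, ← ihB]
                rcases run (some true) (letter pe sp) (k+1) with _ | (_|_) <;> simp [step]
              · refine iff_of_false ?_ (spoke_not_A hsp)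
                rcases run (some true) (letter pe sp) (k+1) with _ | (_|_) <;> simp [step]
          | false =>
              constructor
              · refine iff_of_false ?_ (ff_not_B hpe hsp)
                rcases run (some true) (letter pe sp) (k+1) with _ | (_|_) <;> simp [step]
              · rw [ff_A hpe hsp, ← ihB]
                rcases run (some true) (letter pe sp) (k+1) with _ | (_|_) <;> simp [step]

end FanAux

namespace FanAux

section Graph

variable {n : ℕ} (T : Finset (Fin n ⊕ {i : Fin n // (i : ℕ) + 1 < n}))

/-- Spoke indicator. -/
def spT (k : ℕ) : Bool :=
  if h : k < n then decide (Sum.inl (⟨k, h⟩ : Fin n) ∈ T) else false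

/-- Path-edge indicator: `peT k` means the edge between `k` and `k+1` is in `T`. -/
def peT (k : ℕ) : Bool :=
  if h : k + 1 < n then
    decide (Sum.inr (⟨⟨k, Nat.lt_of_succ_lt h⟩, h⟩ : {i : Fin n // (i : ℕ) + 1 < n}) ∈ T)
  else false

lemma spT_iff {k : ℕ} (h : k < n) : spT T k = true ↔ Sum.inl (⟨k, h⟩ : Fin n) ∈ T := by
  simp [spT, h]

lemma spT_lt {k : ℕ} (h : spT T k = true) : k < n := by
  by_contra hn
  rw [spT, dif_neg hn] at h
  exact absurd h (by simp)

lemma spT_fin (i : Fin n) : spT T (i : ℕ) = true ↔ Sum.inl i ∈ T := by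
  rw [spT_iff T i.isLt]

lemma peT_iff {k : ℕ} (h : k + 1 < n) :
    peT T k = true ↔
      Sum.inr (⟨⟨k, Nat.lt_of_succ_lt h⟩, h⟩ : {i : Fin n // (i : ℕ) + 1 < n}) ∈ T := by
  simp [peT, h]

lemma peT_lt {k : ℕ} (h : peT T k = true) : k + 1 < n := by
  by_contra hn
  rw [peT, dif_neg hn] at h
  exact absurd h (by simp)

lemma peT_sub (e : {i : Fin n // (i : ℕ) + 1 < n}) :
    peT T ((e.1 : ℕ)) = true ↔ Sum.inr e ∈ T := by
  rw [peT_iff T e.2]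

/-- The step relation of the multigraph restricted to `T`. -/
def Rel (a b : Option (Fin n)) : Prop := ∃ e ∈ T, fanEnds n e = s(a, b)

lemma Rel_symm : ∀ {a b}, Rel T a b → Rel T b a := by
  rintro a b ⟨e, he, heq⟩
  exact ⟨e, he, by rw [heq, Sym2.eq_swap]⟩

lemma rtg_symm {a b} (h : Relation.ReflTransGen (Rel T) a b) :
    Relation.ReflTransGen (Rel T) b a :=
  by haveI : Std.Symm (Rel T) := ⟨fun _ _ hr => Rel_symm T hr⟩; exact Std.Symm.symm _ _ h

lemma reach_leader : ∀ (k : ℕ) (hk : k < n) (hl : leader (peT T) k < n),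
    Relation.ReflTransGen (Rel T) (some ⟨k, hk⟩) (some ⟨leader (peT T) k, hl⟩)
  | 0, hk, hl => Relation.ReflTransGen.refl
  | (k+1), hk, hl => by
      cases hpe : peT T k with
      | false =>
          simp only [leader_succ_neg _ hpe]
          exact Relation.ReflTransGen.refl
      | true =>
          have hkn : k < n := by omega
          have hstep : Rel T (some ⟨k+1, hk⟩) (some ⟨k, hkn⟩) := by
            have mem := (peT_iff T (show k+1 < n from hk)).mp hpe
            exact Rel_symm T ⟨Sum.inr ⟨⟨k, hkn⟩, hk⟩, mem, rfl⟩
          have hls := leader_succ_pos (peT T) hpe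
          have hl' : leader (peT T) k < n := by rw [← hls]; exact hl
          have tail := reach_leader k hkn hl'
          have : (⟨leader (peT T) (k+1), hl⟩ : Fin n) = ⟨leader (peT T) k, hl'⟩ :=
            Fin.ext hls
          rw [this]
          exact Relation.ReflTransGen.head hstep tail

lemma reach_none (hcov : Cov (peT T) (spT T) n) :
    ∀ (k : ℕ) (hk : k < n), Relation.ReflTransGen (Rel T) (some ⟨k, hk⟩) none := by
  intro k hk
  obtain ⟨i, hi, hli, hsi⟩ := hcov k hk
  have hlk : leader (peT T) k < n := lt_of_le_of_lt (leader_le _ _) hk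
  have hlin : leader (peT T) i < n := lt_of_le_of_lt (leader_le _ _) hi
  have r1 := reach_leader T k hk hlk
  have r2 := reach_leader T i hi hlin
  have hcast : (⟨leader (peT T) i, hlin⟩ : Fin n) = ⟨leader (peT T) k, hlk⟩ := Fin.ext hli
  rw [hcast] at r2
  have hspoke : Rel T none (some ⟨i, hi⟩) :=
    ⟨Sum.inl ⟨i, hi⟩, (spT_iff T hi).mp hsi, rfl⟩
  exact r1.trans ((rtg_symm T r2).trans (Relation.ReflTransGen.single (Rel_symm T hspoke)))

lemma conn_of_cov (hcov : Cov (peT T) (spT T) n) :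
    ∀ u v : Option (Fin n), Relation.ReflTransGen (Rel T) u v := by
  have H : ∀ u : Option (Fin n), Relation.ReflTransGen (Rel T) u none := by
    rintro (_ | x)
    · exact Relation.ReflTransGen.refl
    · have := reach_none T hcov (x : ℕ) x.isLt
      simpa using this
  exact fun u v => (H u).trans (rtg_symm T (H v))

lemma conn_cov (hconn : ∀ u v : Option (Fin n), Relation.ReflTransGen (Rel T) u v) :
    Cov (peT T) (spT T) n := by
  intro j hj
  by_contra hc
  push_neg at hc
  set lj := leader (peT T) j with hlj
  have key : ∀ a b, Rel T a b →
      (∃ x : Fin n, a = some x ∧ leader (peT T) (x : ℕ) = lj) →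
      (∃ x : Fin n, b = some x ∧ leader (peT T) (x : ℕ) = lj) := by
    rintro a b ⟨e, he, heq⟩ ⟨x, rfl, hx⟩
    match e with
    | Sum.inl i =>
        rw [show fanEnds n (Sum.inl i) = s(none, some i) from rfl, Sym2.eq_iff] at heq
        rcases heq with ⟨h1, h2⟩ | ⟨h1, h2⟩
        · exact absurd h1 (by simp)
        · exfalso
          have hix : i = x := by injection h2
          subst hix
          have hspi : spT T (i : ℕ) = true := (spT_fin T i).mpr he
          exact absurd hspi (by simpa using hc (i : ℕ) i.isLt hx)
    | Sum.inr ⟨i, h2⟩ =>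
        rw [show fanEnds n (Sum.inr ⟨i, h2⟩) = s(some i, some ⟨(i : ℕ) + 1, h2⟩) from rfl,
          Sym2.eq_iff] at heq
        have hpe : peT T (i : ℕ) = true := (peT_sub T ⟨i, h2⟩).mpr he
        have hstep := leader_succ_pos (peT T) hpe
        rcases heq with ⟨ha, hb⟩ | ⟨ha, hb⟩
        · have hix : i = x := by injection ha
          refine ⟨⟨(i : ℕ) + 1, h2⟩, hb.symm, ?_⟩
          rw [show ((⟨(i : ℕ) + 1, h2⟩ : Fin n) : ℕ) = (i : ℕ) + 1 from rfl, hstep, hix, hx]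
        · have hix : (⟨(i : ℕ) + 1, h2⟩ : Fin n) = x := by injection hb
          refine ⟨i, ha.symm, ?_⟩
          rw [← hx, ← hix]
          exact hstep.symm
  exfalso
  have chain : ∀ {v}, Relation.ReflTransGen (Rel T) (some ⟨j, hj⟩) v →
      (∃ x : Fin n, v = some x ∧ leader (peT T) (x : ℕ) = lj) := by
    intro v h
    induction h with
    | refl => exact ⟨⟨j, hj⟩, rfl, rfl⟩
    | tail hab hstep ih => exact key _ _ hstep ih
  obtain ⟨x, hx, -⟩ := chain (hconn (some ⟨j, hj⟩) none)
  exact absurd hx (by simp)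

/-- The set of block leaders. -/
def Ld : Finset ℕ := (Finset.range n).filter (fun k => leader (peT T) k = k)

lemma card_Ld : (Ld T).card + T.toRight.card = n := by
  classical
  have hsplit := Finset.card_filter_add_card_filter_not
    (s := Finset.range n) (p := fun k => leader (peT T) k = k)
  rw [Finset.card_range] at hsplit
  have hbij : T.toRight.card =
      ((Finset.range n).filter (fun k => ¬ leader (peT T) k = k)).card := by
    refine Finset.card_bij (fun e _ => (e.1 : ℕ) + 1) ?_ ?_ ?_
    · intro e he
      rw [Finset.mem_toRight] at he
      have hpe : peT T ((e.1 : ℕ)) = true := (peT_sub T e).mpr he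
      have := leader_succ_pos (peT T) hpe
      have hle := leader_le (peT T) (e.1 : ℕ)
      simp only [Finset.mem_filter, Finset.mem_range]
      exact ⟨e.2, by omega⟩
    · intro e1 h1 e2 h2 heq
      apply Subtype.ext
      apply Fin.ext
      omega
    · intro k hk
      simp only [Finset.mem_filter, Finset.mem_range] at hk
      obtain ⟨hkn, hnl⟩ := hk
      match k, hkn, hnl with
      | 0, hkn, hnl => exact absurd rfl hnl
      | (m+1), hkn, hnl =>
          cases hpe : peT T m with
          | false => exact absurd (leader_succ_neg (peT T) hpe) hnl
          | true =>
              have hm : m + 1 < n := peT_lt T hpe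
              have he := (peT_iff T hm).mp hpe
              refine ⟨⟨⟨m, Nat.lt_of_succ_lt hm⟩, hm⟩, ?_, rfl⟩
              rw [Finset.mem_toRight]
              exact he
  rw [Ld]
  omega

lemma card_left_of_cov_inj (hcov : Cov (peT T) (spT T) n)
    (h1 : I1 (peT T) (spT T) n) : T.toLeft.card = (Ld T).card := by
  classical
  refine Finset.card_bij (fun i _ => leader (peT T) (i : ℕ)) ?_ ?_ ?_
  · intro i hi
    simp only [Ld, Finset.mem_filter, Finset.mem_range]
    exact ⟨lt_of_le_of_lt (leader_le _ _) i.isLt, leader_idem _ _⟩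
  · intro i1 h1' i2 h2' heq
    rw [Finset.mem_toLeft] at h1' h2'
    exact Fin.ext (h1 (i1 : ℕ) (i2 : ℕ) i1.isLt i2.isLt heq
      ((spT_fin T i1).mpr h1') ((spT_fin T i2).mpr h2'))
  · intro l hl
    simp only [Ld, Finset.mem_filter, Finset.mem_range] at hl
    obtain ⟨hln, hll⟩ := hl
    obtain ⟨i, hi, hli, hsi⟩ := hcov l hln
    refine ⟨⟨i, hi⟩, ?_, ?_⟩
    · rw [Finset.mem_toLeft]
      exact (spT_iff T hi).mp hsi
    · exact (by rw [hli, hll] : leader (peT T) i = l)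

lemma I1_of_card (hcard : T.card = n) (hcov : Cov (peT T) (spT T) n) :
    I1 (peT T) (spT T) n := by
  classical
  have hsum := Finset.card_toLeft_add_card_toRight (u := T)
  have hld := card_Ld T
  have hle : T.toLeft.card ≤ (Ld T).card := by omega
  have hinj := Finset.inj_on_of_surj_on_of_card_le
    (s := T.toLeft) (t := Ld T)
    (fun i _ => leader (peT T) (i : ℕ))
    (fun i hi => by
      simp only [Ld, Finset.mem_filter, Finset.mem_range]
      exact ⟨lt_of_le_of_lt (leader_le _ _) i.isLt, leader_idem _ _⟩)
    (fun l hl => by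
      simp only [Ld, Finset.mem_filter, Finset.mem_range] at hl
      obtain ⟨hln, hll⟩ := hl
      obtain ⟨i, hi, hli, hsi⟩ := hcov l hln
      refine ⟨⟨i, hi⟩, ?_, ?_⟩
      · rw [Finset.mem_toLeft]
        exact (spT_iff T hi).mp hsi
      · exact (by rw [hli, hll] : leader (peT T) i = l))
    hle
  intro i i' hi hi' hll hsi hsi'
  have m1 : (⟨i, hi⟩ : Fin n) ∈ T.toLeft := by
    rw [Finset.mem_toLeft]; exact (spT_iff T hi).mp hsi
  have m2 : (⟨i', hi'⟩ : Fin n) ∈ T.toLeft := by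
    rw [Finset.mem_toLeft]; exact (spT_iff T hi').mp hsi'
  have := hinj m1 m2 hll
  exact congrArg Fin.val this

theorem spanning_iff_Bchar (hn : 0 < n) :
    IsSpanningTree (fanEnds n) T ↔ Bchar (peT T) (spT T) n := by
  have hcardV : Fintype.card (Option (Fin n)) = n + 1 := by simp
  constructor
  · rintro ⟨hcard, hconn⟩
    have hcov := conn_cov T hconn
    have hcard' : T.card = n := by rw [hcardV] at hcard; omega
    exact ⟨I1_of_card T hcard' hcov, hcov⟩
  · rintro ⟨h1, h2⟩
    constructor
    · rw [hcardV]
      have := card_left_of_cov_inj T h2 h1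
      have := card_Ld T
      have := Finset.card_toLeft_add_card_toRight (u := T)
      omega
    · exact conn_of_cov T h2

end Graph

end FanAux

namespace FanAux

section Words

variable {m : ℕ}

/-- The word of a subgraph. -/
def wOf (T : Finset (Fin (m+1) ⊕ {i : Fin (m+1) // (i : ℕ) + 1 < m+1})) :
    Fin (m+1) → Bool × Bool :=
  fun i => letter (peT T) (spT T) (i : ℕ)

def pw (w : Fin (m+1) → Bool × Bool) :
    (Fin (m+1) ⊕ {i : Fin (m+1) // (i : ℕ) + 1 < m+1}) → Bool
  | Sum.inl i => (w i).2
  | Sum.inr e => (w ⟨(e.1 : ℕ) + 1, e.2⟩).1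

/-- The subgraph of a word. -/
def TOf (w : Fin (m+1) → Bool × Bool) :
    Finset (Fin (m+1) ⊕ {i : Fin (m+1) // (i : ℕ) + 1 < m+1}) :=
  Finset.univ.filter (fun e => pw w e = true)

lemma spT_TOf (w : Fin (m+1) → Bool × Bool) {k : ℕ} (hk : k < m+1) :
    spT (TOf w) k = (w ⟨k, hk⟩).2 := by
  rw [spT, dif_pos hk]
  rw [Bool.eq_iff_iff, decide_eq_true_iff]
  simp only [TOf, Finset.mem_filter, Finset.mem_univ, true_and]
  exact Iff.rfl

lemma peT_TOf (w : Fin (m+1) → Bool × Bool) {k : ℕ} (hk : k + 1 < m+1) :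
    peT (TOf w) k = (w ⟨k+1, hk⟩).1 := by
  rw [peT, dif_pos hk]
  rw [Bool.eq_iff_iff, decide_eq_true_iff]
  simp only [TOf, Finset.mem_filter, Finset.mem_univ, true_and]
  exact Iff.rfl

lemma TOf_wOf (T : Finset (Fin (m+1) ⊕ {i : Fin (m+1) // (i : ℕ) + 1 < m+1})) :
    TOf (wOf T) = T := by
  ext e
  simp only [TOf, Finset.mem_filter, Finset.mem_univ, true_and]
  match e with
  | Sum.inl i =>
      show (wOf T i).2 = true ↔ _
      rw [show (wOf T i).2 = spT T (i : ℕ) from rfl]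
      exact spT_fin T i
  | Sum.inr e =>
      show (wOf T ⟨(e.1 : ℕ) + 1, e.2⟩).1 = true ↔ _
      have h1 : (wOf T ⟨(e.1 : ℕ) + 1, e.2⟩).1 = peT T (e.1 : ℕ) := by
        show (if (e.1 : ℕ) + 1 = 0 then false else peT T ((e.1 : ℕ) + 1 - 1)) = _
        simp
      rw [h1]
      exact peT_sub T e

lemma wOf_TOf (w : Fin (m+1) → Bool × Bool) (h0 : (w 0).1 = false) :
    wOf (TOf w) = w := by
  funext i
  refine Prod.ext ?_ ?_
  · show (if (i : ℕ) = 0 then false else peT (TOf w) ((i : ℕ) - 1)) = (w i).1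
    rcases h : (i : ℕ) with _ | k
    · rw [if_pos rfl]
      have : i = 0 := Fin.ext h
      rw [this, h0]
    · rw [if_neg (by omega)]
      have hk : k + 1 < m + 1 := h ▸ i.isLt
      rw [Nat.add_sub_cancel, peT_TOf w hk]
      have hfin : (⟨k+1, hk⟩ : Fin (m+1)) = i :=
        Fin.ext (show ((⟨k+1, hk⟩ : Fin (m+1)) : ℕ) = (i : ℕ) from h.symm)
      rw [hfin]
  · show spT (TOf w) (i : ℕ) = (w i).2
    rw [spT_TOf w i.isLt]

/-- Main equivalence: spanning trees of the fan correspond to accepted words. -/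
noncomputable def treeEquiv (m : ℕ) :
    {T : Finset (Fin (m+1) ⊕ {i : Fin (m+1) // (i : ℕ) + 1 < m+1}) //
        IsSpanningTree (fanEnds (m+1)) T} ≃
    {w : Fin (m+1) → Bool × Bool //
        (w 0).1 = false ∧ acc (some true) (m+1) w = true} := by
  have hiff : ∀ T : Finset (Fin (m+1) ⊕ {i : Fin (m+1) // (i : ℕ) + 1 < m+1}),
      IsSpanningTree (fanEnds (m+1)) T ↔ acc (some true) (m+1) (wOf T) = true := by
    intro T
    rw [spanning_iff_Bchar T (by omega)]
    have he : acc (some true) (m+1) (wOf T) =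
        decide (run (some true) (letter (peT T) (spT T)) (m+1) = some true) :=
      acc_eq (m+1) (letter (peT T) (spT T)) (some true)
    rw [he, decide_eq_true_iff]
    exact ((autoChar (peT T) (spT T) m).1).symm
  exact
  { toFun := fun T => ⟨wOf T.1, rfl, (hiff T.1).mp T.2⟩
    invFun := fun w => ⟨TOf w.1, by
      rw [hiff (TOf w.1), wOf_TOf w.1 w.2.1]
      exact w.2.2⟩
    left_inv := fun T => Subtype.ext (TOf_wOf T.1)
    right_inv := fun w => Subtype.ext (wOf_TOf w.1 w.2.1) }

lemma card_words (m : ℕ) :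
    Fintype.card {w : Fin (m+1) → Bool × Bool //
        (w 0).1 = false ∧ acc (some true) (m+1) w = true}
      = cnt m (some false) + cnt m (some true) := by
  classical
  have hacc : ∀ w : Fin (m+1) → Bool × Bool,
      acc (some true) (m+1) w = acc (step (some true) (w 0)) m (fun i => w i.succ) :=
    fun _ => rfl
  let e0 := (Fin.consEquiv (fun _ : Fin (m+1) => Bool × Bool)).symm
  let e : {w : Fin (m+1) → Bool × Bool //
        (w 0).1 = false ∧ acc (some true) (m+1) w = true} ≃
      (Σ x : Bool × Bool, {t : Fin m → Bool × Bool //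
        x.1 = false ∧ acc (step (some true) x) m t = true}) :=
    (Equiv.subtypeEquiv e0 (fun w => by rw [hacc]; rfl)).trans
      (Equiv.subtypeProdEquivSigmaSubtype
        (fun (x : Bool × Bool) (t : Fin m → Bool × Bool) =>
          x.1 = false ∧ acc (step (some true) x) m t = true))
  rw [Fintype.card_congr e, Fintype.card_sigma, Fintype.sum_prod_type,
    Fintype.sum_bool, Fintype.sum_bool, Fintype.sum_bool]
  have hzero : ∀ s : Bool, Fintype.card {t : Fin m → Bool × Bool //
      (true, s).1 = false ∧ acc (step (some true) (true, s)) m t = true} = 0 :=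
    fun s => Fintype.card_eq_zero_iff.mpr ⟨fun t => absurd t.2.1 (by simp)⟩
  have hone : ∀ s : Bool, Fintype.card {t : Fin m → Bool × Bool //
      (false, s).1 = false ∧ acc (step (some true) (false, s)) m t = true}
      = cnt m (step (some true) (false, s)) := by
    intro s
    rw [Fintype.card_congr (Equiv.subtypeEquivRight
      (p := fun t : Fin m → Bool × Bool =>
        (false, s).1 = false ∧ acc (step (some true) (false, s)) m t = true)
      (q := fun t : Fin m → Bool × Bool => acc (step (some true) (false, s)) m t = true)
      (fun t => by simp))]
    exact card_acc m _
  rw [hzero true, hzero false, hone true, hone false]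
  have e1 : step (some true) (false, true) = some true := rfl
  have e2 : step (some true) (false, false) = some false := rfl
  rw [e1, e2]
  omega

lemma tauFan_succ (m : ℕ) :
    tauFan (m+1) = cnt m (some false) + cnt m (some true) := by
  rw [tauFan]
  have h1 : {T : Finset (Fin (m+1) ⊕ {i : Fin (m+1) // (i : ℕ) + 1 < m+1}) |
      IsSpanningTree (fanEnds (m+1)) T}.ncard
      = Nat.card {T : Finset (Fin (m+1) ⊕ {i : Fin (m+1) // (i : ℕ) + 1 < m+1}) //
          IsSpanningTree (fanEnds (m+1)) T} :=
    (Nat.card_coe_set_eq _).symm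
  rw [h1, Nat.card_congr (treeEquiv m), Nat.card_eq_fintype_card]
  exact card_words m

end Words

end FanAux

/-- The number of spanning trees of the fan satisfies `τ(F_1) = 1`, `τ(F_2) = 3` and
`τ(F_n) = 3·τ(F_{n−1}) − τ(F_{n−2})` for `n ≥ 3`. -/
theorem tauFan_recurrence :
    tauFan 1 = 1 ∧ tauFan 2 = 3 ∧
    ∀ n : ℕ, 3 ≤ n → (tauFan n : ℤ) = 3 * tauFan (n - 1) - tauFan (n - 2) := by
  refine ⟨by rw [FanAux.tauFan_succ 0]; rfl, by rw [FanAux.tauFan_succ 1]; rfl, ?_⟩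
  intro n hn
  obtain ⟨m, rfl⟩ : ∃ m, n = m + 3 := ⟨n - 3, by omega⟩
  rw [show m + 3 - 1 = m + 2 from rfl, show m + 3 - 2 = m + 1 from rfl,
    show m + 3 = (m + 2) + 1 from rfl]
  rw [FanAux.tauFan_succ (m+2), FanAux.tauFan_succ (m+1), FanAux.tauFan_succ m]
  have hA : FanAux.cnt (m+2) (some false) + FanAux.cnt m (some false)
      = 3 * FanAux.cnt (m+1) (some false) := by
    simp only [FanAux.cnt]; ring
  have hB : FanAux.cnt (m+2) (some true) + FanAux.cnt m (some true)
      = 3 * FanAux.cnt (m+1) (some true) := by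
    simp only [FanAux.cnt]; ring
  omega
end
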